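/- (Hardness of approximate gradient descent.) Let $\mathcal{A}$ be a finite distribution family, $\{h_w : w \in \mathbb{R}^N\}$ a differentiable parametric class, and consider $\Delta$-approximate gradient descent on the hinge loss: $w_t = w_{t-1} - \eta v_{t-1}$ where $v_t \in \Delta\mathbb{Z}^N$ satisfies $\|v_t - \nabla_w L_{f(\mathcal{D})}(h_{w_{t-1}})\|_\infty \le \Delta/2$. Suppose the (deterministic) initialization $w_0$ satisfies $|h_{w_0}(x)| \le 1$ and $\|\nabla_w h_{w_0}(x)\|_2 \le B$ for all $x$, and $\Delta \ge 4\sqrt{2 B^2 N \mathrm{Var}(\mathcal{A})}$. Then for at least a $3/4$ fraction of pairs $(f,\mathcal{D}) \in \mathcal{A}$: the algorithm's update at step 1 is $v_0 = 0$ (so it outputs $h_{w_0}$), and $L_{f(\mathcal{D})}(h_{w_0}) \ge 1 - \sqrt{8\,\mathrm{Var}(\mathcal{A})}$. Consequently $\mathbb{E}_{(f,\mathcal{D}) \sim \mathcal{A}}[L_{f(\mathcal{D})}(h_{w_T})] \ge \frac{3}{4}(1 - \sqrt{8\,\mathrm{Var}(\mathcal{A})})$. -/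

import Mathlib

open Finset

/-- The "variance" of a finite family of labeled distributions. -/
noncomputable def famVar {X ι : Type} [Fintype X] [Fintype ι]
    (F D : ι → X → ℝ) : ℝ :=
  sSup {v : ℝ | ∃ φ : X → ℝ, (∀ x, |φ x| ≤ 1) ∧
    v = (Fintype.card ι : ℝ)⁻¹ * ∑ a, (∑ x, D a x * (F a x * φ x)) ^ 2}

section Helpers
variable {X ι : Type} [Fintype X] [Fintype ι] [Nonempty ι]

omit [Fintype ι] [Nonempty ι] in
lemma inner_abs_le_one (F D : ι → X → ℝ)
    (hD0 : ∀ a x, 0 ≤ D a x) (hD1 : ∀ a, ∑ x, D a x = 1)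
    (hF : ∀ a x, F a x = 1 ∨ F a x = -1)
    (φ : X → ℝ) (hφ : ∀ x, |φ x| ≤ 1) (a : ι) :
    |∑ x, D a x * (F a x * φ x)| ≤ 1 := by
  calc |∑ x, D a x * (F a x * φ x)| ≤ ∑ x, |D a x * (F a x * φ x)| :=
        Finset.abs_sum_le_sum_abs _ _
    _ ≤ ∑ x, D a x := by
        refine Finset.sum_le_sum fun x _ => ?_
        rw [abs_mul, abs_of_nonneg (hD0 a x)]
        have hFx : |F a x| = 1 := by rcases hF a x with h' | h' <;> simp [h']
        have : |F a x * φ x| ≤ 1 := by rw [abs_mul, hFx, one_mul]; exact hφ x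
        nlinarith [hD0 a x, abs_nonneg (F a x * φ x)]
    _ = 1 := hD1 a

lemma famVar_key (F D : ι → X → ℝ)
    (hD0 : ∀ a x, 0 ≤ D a x) (hD1 : ∀ a, ∑ x, D a x = 1)
    (hF : ∀ a x, F a x = 1 ∨ F a x = -1)
    (φ : X → ℝ) (hφ : ∀ x, |φ x| ≤ 1) :
    ∑ a, (∑ x, D a x * (F a x * φ x)) ^ 2 ≤ (Fintype.card ι : ℝ) * famVar F D := by
  have hcard : (0:ℝ) < Fintype.card ι := by
    exact_mod_cast Fintype.card_pos
  have hbdd : BddAbove {v : ℝ | ∃ φ : X → ℝ, (∀ x, |φ x| ≤ 1) ∧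
      v = (Fintype.card ι : ℝ)⁻¹ * ∑ a, (∑ x, D a x * (F a x * φ x)) ^ 2} := by
    refine ⟨1, ?_⟩
    rintro v ⟨ψ, hψ, rfl⟩
    have hsum : ∑ a, (∑ x, D a x * (F a x * ψ x)) ^ 2 ≤ (Fintype.card ι : ℝ) := by
      calc ∑ a, (∑ x, D a x * (F a x * ψ x)) ^ 2 ≤ ∑ _a : ι, (1:ℝ) := by
            refine Finset.sum_le_sum fun a _ => ?_
            have := inner_abs_le_one F D hD0 hD1 hF ψ hψ a
            nlinarith [abs_nonneg (∑ x, D a x * (F a x * ψ x)), sq_abs (∑ x, D a x * (F a x * ψ x))]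
        _ = (Fintype.card ι : ℝ) := by simp
    rw [inv_mul_le_iff₀ hcard]
    linarith [hsum]
  have hmem : (Fintype.card ι : ℝ)⁻¹ * ∑ a, (∑ x, D a x * (F a x * φ x)) ^ 2 ∈
      {v : ℝ | ∃ φ : X → ℝ, (∀ x, |φ x| ≤ 1) ∧
        v = (Fintype.card ι : ℝ)⁻¹ * ∑ a, (∑ x, D a x * (F a x * φ x)) ^ 2} :=
    ⟨φ, hφ, rfl⟩
  have := le_csSup hbdd hmem
  rw [famVar]
  calc ∑ a, (∑ x, D a x * (F a x * φ x)) ^ 2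
      = (Fintype.card ι : ℝ) * ((Fintype.card ι : ℝ)⁻¹ * ∑ a, (∑ x, D a x * (F a x * φ x)) ^ 2) := by
        field_simp
    _ ≤ _ := mul_le_mul_of_nonneg_left this (le_of_lt hcard)

lemma famVar_nonneg (F D : ι → X → ℝ)
    (hD0 : ∀ a x, 0 ≤ D a x) (hD1 : ∀ a, ∑ x, D a x = 1)
    (hF : ∀ a x, F a x = 1 ∨ F a x = -1) :
    0 ≤ famVar F D := by
  have := famVar_key F D hD0 hD1 hF (fun _ => 0) (by intro x; simp)
  have hcard : (0:ℝ) < Fintype.card ι := by exact_mod_cast Fintype.card_pos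
  simp at this
  nlinarith

open Classical in
lemma markov_le (q : ι → ℝ) (hq0 : ∀ a, 0 ≤ q a) (t : ℝ) (ht : 0 < t)
    (hsum : ∑ a, q a ≤ (Fintype.card ι : ℝ) * t / 8) :
    ((Finset.univ.filter (fun a => t ≤ q a)).card : ℝ) ≤ (Fintype.card ι : ℝ) / 8 := by
  set s := Finset.univ.filter (fun a => t ≤ q a) with hs
  have h1 : (s.card : ℝ) * t ≤ ∑ a, q a := by
    calc (s.card : ℝ) * t = ∑ _a ∈ s, t := by rw [Finset.sum_const, nsmul_eq_mul]
      _ ≤ ∑ a ∈ s, q a := Finset.sum_le_sum fun a ha => (Finset.mem_filter.mp ha).2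
      _ ≤ ∑ a, q a := Finset.sum_le_sum_of_subset_of_nonneg (Finset.subset_univ s)
          (fun a _ _ => hq0 a)
  have h2 := h1.trans hsum
  have h3 : (#s : ℝ) * t * 8 ≤ ↑(Fintype.card ι) * t := by linarith
  have h4 : (#s : ℝ) * 8 ≤ ↑(Fintype.card ι) := by nlinarith
  linarith

open Classical in
lemma markov_lt (q : ι → ℝ) (hq0 : ∀ a, 0 ≤ q a) (t : ℝ) (ht : 0 ≤ t)
    (hsum : ∑ a, q a ≤ (Fintype.card ι : ℝ) * t / 8) :
    ((Finset.univ.filter (fun a => t < q a)).card : ℝ) ≤ (Fintype.card ι : ℝ) / 8 := by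
  rcases eq_or_lt_of_le ht with rfl | ht'
  · have hq : ∀ a, q a = 0 := by
      intro a
      have h2 : ∑ a, q a ≤ 0 := by simpa using hsum
      have h3 : 0 ≤ ∑ a, q a := Finset.sum_nonneg fun a _ => hq0 a
      have h4 : ∑ a, q a = 0 := le_antisymm h2 h3
      exact (Finset.sum_eq_zero_iff_of_nonneg (fun a _ => hq0 a)).mp h4 a (Finset.mem_univ a)
    have : Finset.univ.filter (fun a => (0:ℝ) < q a) = ∅ := by
      apply Finset.filter_false_of_mem
      intro a _; rw [hq a]; exact lt_irrefl 0
    rw [this]; simp; positivity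
  · have hsub : Finset.univ.filter (fun a => t < q a) ⊆ Finset.univ.filter (fun a => t ≤ q a) := by
      intro a ha
      simp only [Finset.mem_filter, Finset.mem_univ, true_and] at *
      exact le_of_lt ha
    calc ((Finset.univ.filter (fun a => t < q a)).card : ℝ)
        ≤ ((Finset.univ.filter (fun a => t ≤ q a)).card : ℝ) := by
          exact_mod_cast Finset.card_le_card hsub
      _ ≤ _ := markov_le q hq0 t ht' hsum

end Helpers

/-- hardness of Δ-approximate gradient descent with the hinge loss:
with initialization satisfying `|h_{w₀}(x)| ≤ 1`, gradient bound
`‖∇_w h_{w₀}(x)‖₂ ≤ B` (`g x i` is the partial derivative in coordinate `i` at `w₀`),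
and `Δ ≥ 4√(2B²N·Var(A))`, for at least a `3/4` fraction of pairs `(f,D) ∈ A` every
valid rounded gradient `v₀ ∈ Δℤ^N` (within `Δ/2` in `ℓ∞` of
`∇_w L_{f(D)}(h_{w₀}) = -E_{x~D}[f(x)∇_w h_{w₀}(x)]`) is `0` — so the algorithm outputs
`h_{w₀}` — and `L_{f(D)}(h_{w₀}) ≥ 1 - √(8Var(A))`. Consequently, if the output
parameters equal `w₀` on this good set, the expected loss over the family is at least
`(3/4)(1 - √(8Var(A)))`. -/
theorem approx_gd_hardness {X ι : Type} [Fintype X] [Fintype ι] [Nonempty ι] {N : ℕ}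
    (F D : ι → X → ℝ)
    (hD0 : ∀ a x, 0 ≤ D a x) (hD1 : ∀ a, ∑ x, D a x = 1)
    (hF : ∀ a x, F a x = 1 ∨ F a x = -1)
    (h : (Fin N → ℝ) → X → ℝ)
    (w0 : Fin N → ℝ)
    (g : X → Fin N → ℝ)
    (hg : ∀ x i, HasDerivAt (fun s => h (Function.update w0 i s) x) (g x i) (w0 i))
    (hinit : ∀ x, |h w0 x| ≤ 1)
    (B : ℝ) (hB : ∀ x, Real.sqrt (∑ i, g x i ^ 2) ≤ B)
    (Δ η : ℝ) (hΔ : Δ ≥ 4 * Real.sqrt (2 * B ^ 2 * N * famVar F D)) :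
    let Good : Set ι := {a |
      (∀ v : Fin N → ℝ, (∀ i, ∃ m : ℤ, v i = Δ * m) →
        (∀ i, |v i - (-(∑ x, D a x * (F a x * g x i)))| ≤ Δ / 2) → v = 0) ∧
      (∑ x, D a x * max (1 - h w0 x * F a x) 0 ≥ 1 - Real.sqrt (8 * famVar F D))}
    ((3 : ℝ) / 4 * Fintype.card ι ≤ Good.ncard) ∧
    (∀ wT : ι → Fin N → ℝ, (∀ a ∈ Good, wT a = w0) →
      (Fintype.card ι : ℝ)⁻¹ * ∑ a, ∑ x, D a x * max (1 - h (wT a) x * F a x) 0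
        ≥ 3 / 4 * (1 - Real.sqrt (8 * famVar F D))) := by
  classical
  intro Good
  set V := famVar F D with hVdef
  have hV0 : 0 ≤ V := famVar_nonneg F D hD0 hD1 hF
  have hcard : (0:ℝ) < Fintype.card ι := by exact_mod_cast Fintype.card_pos
  have hX : Nonempty X := by
    by_contra hx
    rw [not_nonempty_iff] at hx
    have := hD1 (Classical.arbitrary ι)
    simp [Finset.univ_eq_empty] at this
  have hB0 : 0 ≤ B := le_trans (Real.sqrt_nonneg _) (hB (Classical.arbitrary X))
  have hΔ0 : 0 ≤ Δ := le_trans (by positivity) hΔ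
  have hΔsq : 32 * (B ^ 2 * N * V) ≤ Δ ^ 2 := by
    have hs := Real.sq_sqrt (show (0:ℝ) ≤ 2 * B ^ 2 * N * V by positivity)
    nlinarith [Real.sqrt_nonneg (2 * B ^ 2 * N * V), hΔ]
  set G : ι → Fin N → ℝ := fun a i => ∑ x, D a x * (F a x * g x i) with hGdef
  set q1 : ι → ℝ := fun a => ∑ i, G a i ^ 2 with hq1def
  set q2 : ι → ℝ := fun a => (∑ x, D a x * (F a x * h w0 x)) ^ 2 with hq2def
  have hq10 : ∀ a, 0 ≤ q1 a := fun a => Finset.sum_nonneg fun i _ => sq_nonneg _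
  have hq20 : ∀ a, 0 ≤ q2 a := fun a => sq_nonneg _
  -- gradient norm bound
  have hq1sum : ∑ a, q1 a ≤ (Fintype.card ι : ℝ) * (B ^ 2 * N * V) := by
    have hswap : ∑ a, q1 a = ∑ i, ∑ a, G a i ^ 2 := Finset.sum_comm
    have hper : ∀ i : Fin N, ∑ a, G a i ^ 2 ≤ B ^ 2 * ((Fintype.card ι : ℝ) * V) := by
      intro i
      rcases eq_or_lt_of_le hB0 with hB0' | hBpos
      · -- B = 0 forces g = 0
        have hg0 : ∀ x, g x i = 0 := by
          intro x
          have h1 : Real.sqrt (∑ j, g x j ^ 2) ≤ 0 := by rw [hB0']; exact hB x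
          have h2 : ∑ j, g x j ^ 2 = 0 := by
            have := Real.sqrt_eq_zero (Finset.sum_nonneg fun j _ => sq_nonneg (g x j)) |>.mp
              (le_antisymm h1 (Real.sqrt_nonneg _))
            exact this
          have := (Finset.sum_eq_zero_iff_of_nonneg (fun j _ => sq_nonneg (g x j))).mp h2 i
            (Finset.mem_univ i)
          exact pow_eq_zero_iff (n := 2) (by norm_num) |>.mp this
        have : ∀ a, G a i = 0 := by
          intro a
          simp only [hGdef]
          apply Finset.sum_eq_zero
          intro x _; rw [hg0 x]; ring
        calc ∑ a, G a i ^ 2 = 0 := Finset.sum_eq_zero fun a _ => by rw [this a]; ring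
          _ ≤ B ^ 2 * ((Fintype.card ι : ℝ) * V) := by positivity
      · -- B > 0, use φ = g _ i / B
        have hφ : ∀ x, |g x i / B| ≤ 1 := by
          intro x
          rw [abs_div, abs_of_pos hBpos, div_le_one hBpos]
          have h1 : |g x i| = Real.sqrt (g x i ^ 2) := (Real.sqrt_sq_eq_abs _).symm
          rw [h1]
          refine le_trans (Real.sqrt_le_sqrt ?_) (hB x)
          exact Finset.single_le_sum (fun j _ => sq_nonneg (g x j)) (Finset.mem_univ i)
        have hkey := famVar_key F D hD0 hD1 hF (fun x => g x i / B) hφ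
        have heq : ∀ a, ∑ x, D a x * (F a x * (g x i / B)) = G a i / B := by
          intro a
          rw [hGdef]
          simp only
          rw [Finset.sum_div]
          apply Finset.sum_congr rfl
          intro x _; field_simp
        rw [show (∑ a, (∑ x, D a x * (F a x * (g x i / B))) ^ 2)
            = ∑ a, (G a i / B) ^ 2 from Finset.sum_congr rfl fun a _ => by rw [heq a]] at hkey
        have hexp : ∑ a, (G a i / B) ^ 2 = (∑ a, G a i ^ 2) / B ^ 2 := by
          rw [Finset.sum_div]
          apply Finset.sum_congr rfl
          intro a _; rw [div_pow]
        rw [hexp, div_le_iff₀ (by positivity : (0:ℝ) < B ^ 2)] at hkey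
        calc ∑ a, G a i ^ 2 ≤ (Fintype.card ι : ℝ) * V * B ^ 2 := hkey
          _ = B ^ 2 * ((Fintype.card ι : ℝ) * V) := by ring
    calc ∑ a, q1 a = ∑ i, ∑ a, G a i ^ 2 := hswap
      _ ≤ ∑ _i : Fin N, B ^ 2 * ((Fintype.card ι : ℝ) * V) :=
          Finset.sum_le_sum fun i _ => hper i
      _ = (Fintype.card ι : ℝ) * (B ^ 2 * N * V) := by
          rw [Finset.sum_const, Finset.card_univ, Fintype.card_fin, nsmul_eq_mul]; ring
  have hq2sum : ∑ a, q2 a ≤ (Fintype.card ι : ℝ) * V :=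
    famVar_key F D hD0 hD1 hF (h w0) hinit
  -- bad sets
  set B1 : Finset ι := Finset.univ.filter (fun a => Δ ^ 2 / 4 ≤ q1 a ∧ 0 < Δ) with hB1def
  set B2 : Finset ι := Finset.univ.filter (fun a => 8 * V < q2 a) with hB2def
  have hB1card : (B1.card : ℝ) ≤ (Fintype.card ι : ℝ) / 8 := by
    by_cases hd : 0 < Δ
    · have hsub : B1 ⊆ Finset.univ.filter (fun a => Δ ^ 2 / 4 ≤ q1 a) := by
        intro a ha
        simp only [hB1def, Finset.mem_filter, Finset.mem_univ, true_and] at *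
        exact ha.1
      have ht : 0 < Δ ^ 2 / 4 := by positivity
      have hsum' : ∑ a, q1 a ≤ (Fintype.card ι : ℝ) * (Δ ^ 2 / 4) / 8 := by
        refine hq1sum.trans ?_
        nlinarith [hcard, hΔsq]
      calc (B1.card : ℝ) ≤ ((Finset.univ.filter (fun a => Δ ^ 2 / 4 ≤ q1 a)).card : ℝ) := by
            exact_mod_cast Finset.card_le_card hsub
        _ ≤ _ := markov_le q1 hq10 (Δ ^ 2 / 4) ht hsum'
    · have : B1 = ∅ := by
        rw [hB1def]
        apply Finset.filter_false_of_mem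
        intro a _
        rintro ⟨_, hd'⟩
        exact hd hd'
      rw [this]; simp; positivity
  have hB2card : (B2.card : ℝ) ≤ (Fintype.card ι : ℝ) / 8 := by
    refine markov_lt q2 hq20 (8 * V) (by positivity) ?_
    calc ∑ a, q2 a ≤ (Fintype.card ι : ℝ) * V := hq2sum
      _ = (Fintype.card ι : ℝ) * (8 * V) / 8 := by ring
  set GoodF : Finset ι := Finset.univ \ (B1 ∪ B2) with hGoodFdef
  -- membership
  have hGoodMem : ∀ a ∈ GoodF, a ∈ Good := by
    intro a ha
    rw [hGoodFdef, Finset.mem_sdiff, Finset.mem_union] at ha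
    push_neg at ha
    obtain ⟨-, hnB1, hnB2⟩ := ha
    constructor
    · -- rounded gradient is zero
      intro v hv1 hv2
      funext i
      obtain ⟨m, hm⟩ := hv1 i
      have hv2i := hv2 i
      rw [sub_neg_eq_add] at hv2i
      rcases eq_or_lt_of_le hΔ0 with hΔeq | hΔpos
      · simp only [Pi.zero_apply]
        rw [hm, ← hΔeq]; ring
      · have hq1a : q1 a < Δ ^ 2 / 4 := by
          by_contra hcon
          push_neg at hcon
          exact hnB1 (by simp [hB1def, hcon, hΔpos])
        have hGi : (G a i) ^ 2 ≤ q1 a :=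
          Finset.single_le_sum (fun j _ => sq_nonneg (G a j)) (Finset.mem_univ i)
        have hGabs : |G a i| < Δ / 2 := by
          nlinarith [abs_nonneg (G a i), sq_abs (G a i)]
        have hvi : |v i| < Δ := by
          have : |v i| ≤ |v i + G a i| + |G a i| := by
            calc |v i| = |(v i + G a i) + (-(G a i))| := by ring_nf
              _ ≤ |v i + G a i| + |(-(G a i))| := abs_add_le _ _
              _ = |v i + G a i| + |G a i| := by rw [abs_neg]
          linarith [hv2i]
        simp only [Pi.zero_apply]
        rw [hm]
        rcases eq_or_ne m 0 with rfl | hm0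
        · simp
        · exfalso
          have h1 : (1:ℝ) ≤ |(m:ℝ)| := by
            have := Int.one_le_abs hm0
            calc (1:ℝ) = ((1:ℤ):ℝ) := by norm_num
              _ ≤ ((|m|:ℤ):ℝ) := by exact_mod_cast this
              _ = |(m:ℝ)| := by push_cast; ring
          rw [hm, abs_mul, abs_of_pos hΔpos] at hvi
          nlinarith
    · -- loss lower bound
      have hq2a : q2 a ≤ 8 * V := by
        by_contra hcon
        push_neg at hcon
        exact hnB2 (by simp [hB2def, hcon])
      have habs : |∑ x, D a x * (F a x * h w0 x)| ≤ Real.sqrt (8 * V) := by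
        rw [← Real.sqrt_sq_eq_abs]
        exact Real.sqrt_le_sqrt hq2a
      have step1 : ∑ x, D a x * (1 - h w0 x * F a x)
          ≤ ∑ x, D a x * max (1 - h w0 x * F a x) 0 :=
        Finset.sum_le_sum fun x _ =>
          mul_le_mul_of_nonneg_left (le_max_left _ _) (hD0 a x)
      have step2 : ∑ x, D a x * (1 - h w0 x * F a x)
          = 1 - ∑ x, D a x * (F a x * h w0 x) := by
        have hcong : ∀ x ∈ Finset.univ, D a x * (1 - h w0 x * F a x)
            = D a x - D a x * (F a x * h w0 x) := fun x _ => by ring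
        rw [Finset.sum_congr rfl hcong, Finset.sum_sub_distrib, hD1]
      have : ∑ x, D a x * (F a x * h w0 x) ≤ Real.sqrt (8 * V) :=
        le_trans (le_abs_self _) habs
      show _ ≥ _
      rw [hVdef] at *
      linarith [step1, step2]
  -- cardinality
  have hGoodFcard : (3:ℝ) / 4 * Fintype.card ι ≤ (GoodF.card : ℝ) := by
    have hU : (B1 ∪ B2).card ≤ B1.card + B2.card := Finset.card_union_le B1 B2
    have hle : (B1 ∪ B2) ⊆ Finset.univ := Finset.subset_univ _
    have hcard_eq : GoodF.card = Fintype.card ι - (B1 ∪ B2).card := by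
      rw [hGoodFdef, Finset.card_sdiff_of_subset hle, Finset.card_univ]
    have hle2 : (B1 ∪ B2).card ≤ Fintype.card ι := Finset.card_le_card hle |>.trans_eq
      Finset.card_univ
    have : (GoodF.card : ℝ) = (Fintype.card ι : ℝ) - ((B1 ∪ B2).card : ℝ) := by
      rw [hcard_eq, Nat.cast_sub hle2]
    rw [this]
    have : ((B1 ∪ B2).card : ℝ) ≤ (B1.card : ℝ) + (B2.card : ℝ) := by exact_mod_cast hU
    linarith [hB1card, hB2card]
  have hncard : (3:ℝ) / 4 * Fintype.card ι ≤ Good.ncard := by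
    have hsub : (GoodF : Set ι) ⊆ Good := fun a ha => hGoodMem a (by exact_mod_cast ha)
    have := Set.ncard_le_ncard hsub (Set.toFinite Good)
    rw [Set.ncard_coe_finset] at this
    calc (3:ℝ) / 4 * Fintype.card ι ≤ (GoodF.card : ℝ) := hGoodFcard
      _ ≤ (Good.ncard : ℝ) := by exact_mod_cast this
  refine ⟨hncard, ?_⟩
  intro wT hwT
  set s8 := Real.sqrt (8 * famVar F D) with hs8
  have hterm0 : ∀ (a : ι), 0 ≤ ∑ x, D a x * max (1 - h (wT a) x * F a x) 0 :=
    fun a => Finset.sum_nonneg fun x _ => mul_nonneg (hD0 a x) (le_max_right _ _)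
  rcases le_or_gt (1 - s8) 0 with hneg | hpos
  · have hL : 0 ≤ (Fintype.card ι : ℝ)⁻¹ *
        ∑ a, ∑ x, D a x * max (1 - h (wT a) x * F a x) 0 := by
      apply mul_nonneg (by positivity)
      exact Finset.sum_nonneg fun a _ => hterm0 a
    have : 3 / 4 * (1 - s8) ≤ 0 := by linarith
    linarith [hL]
  · have hbig : ∑ a, ∑ x, D a x * max (1 - h (wT a) x * F a x) 0
        ≥ (GoodF.card : ℝ) * (1 - s8) := by
      calc ∑ a, ∑ x, D a x * max (1 - h (wT a) x * F a x) 0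
          ≥ ∑ a ∈ GoodF, ∑ x, D a x * max (1 - h (wT a) x * F a x) 0 :=
            Finset.sum_le_sum_of_subset_of_nonneg (Finset.subset_univ GoodF)
              (fun a _ _ => hterm0 a)
        _ ≥ ∑ _a ∈ GoodF, (1 - s8) := by
            refine Finset.sum_le_sum fun a ha => ?_
            have hmem := hGoodMem a ha
            have hw := hwT a hmem
            rw [hw]
            exact hmem.2
        _ = (GoodF.card : ℝ) * (1 - s8) := by rw [Finset.sum_const, nsmul_eq_mul]
    have hstep : ∑ a, ∑ x, D a x * max (1 - h (wT a) x * F a x) 0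
        ≥ (3 / 4 * Fintype.card ι) * (1 - s8) := by
      refine le_trans ?_ hbig
      exact mul_le_mul_of_nonneg_right hGoodFcard (le_of_lt hpos)
    have heq : (Fintype.card ι : ℝ)⁻¹ * ((3 / 4 * Fintype.card ι) * (1 - s8))
        = 3 / 4 * (1 - s8) := by field_simp
    calc (Fintype.card ι : ℝ)⁻¹ * ∑ a, ∑ x, D a x * max (1 - h (wT a) x * F a x) 0
        ≥ (Fintype.card ι : ℝ)⁻¹ * ((3 / 4 * Fintype.card ι) * (1 - s8)) :=
          mul_le_mul_of_nonneg_left hstep (by positivity)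
      _ = 3 / 4 * (1 - s8) := heq
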